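/- Let V ⊆ ℤ be a modified set of differences, i.e. for all s, t ∈ V one has 2s − t ∈ V. Then either V has at most one element, or there exist c ∈ ℤ and d ∈ ℕ with d ≥ 1 such that V = {c + j·d : j ∈ ℤ} (the elements of V form a complete arithmetic sequence). -/

import Mathlib

/-- A modified set of differences in ℤ has at most one element, or its elements
form a complete arithmetic sequence `{c + j·d : j ∈ ℤ}` with `d ≥ 1`. -/
theorem modified_set_of_differences_arithmetic (V : Set ℤ)
    (hV : ∀ s ∈ V, ∀ t ∈ V, 2 * s - t ∈ V) :
    V.Subsingleton ∨ ∃ (c : ℤ) (d : ℕ), 1 ≤ d ∧ V = {x : ℤ | ∃ j : ℤ, x = c + j * d} := by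
  rcases Set.eq_empty_or_nonempty V with hE | ⟨v0, hv0⟩
  · left; rw [hE]; exact Set.subsingleton_empty
  set W : Set ℤ := {w | v0 + w ∈ V} with hWdef
  have h0 : (0 : ℤ) ∈ W := by simpa [hWdef] using hv0
  have hop : ∀ x ∈ W, ∀ y ∈ W, 2 * x - y ∈ W := by
    intro x hx y hy
    have h := hV _ hx _ hy
    have e : 2 * (v0 + x) - (v0 + y) = v0 + (2 * x - y) := by ring
    rw [e] at h
    exact h
  have hneg : ∀ x ∈ W, -x ∈ W := by
    intro x hx
    have := hop 0 h0 x hx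
    simpa using this
  -- closure under integer multiples
  have hmulN : ∀ x ∈ W, ∀ n : ℕ, (n : ℤ) * x ∈ W := by
    intro x hx n
    induction n using Nat.twoStepInduction with
    | zero => simpa using h0
    | one => simpa using hx
    | more n ih1 ih2 =>
      have := hop _ ih2 _ ih1
      have e : 2 * ((↑(n + 1) : ℤ) * x) - (↑n : ℤ) * x = (↑(n + 2) : ℤ) * x := by
        push_cast; ring
      rwa [e] at this
  have hmul : ∀ x ∈ W, ∀ k : ℤ, k * x ∈ W := by
    intro x hx k
    rcases k.natAbs_eq with h | h
    · rw [h]; exact hmulN x hx k.natAbs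
    · rw [h]
      have := hneg _ (hmulN x hx k.natAbs)
      simpa [neg_mul] using this
  have hcop2 : ∀ z : ℤ, Odd z → IsCoprime (2 : ℤ) z := by
    intro z hz
    rw [Int.isCoprime_iff_gcd_eq_one]
    have : Odd z.natAbs := Int.natAbs_odd.mpr hz
    simpa [Int.gcd] using Nat.coprime_two_left.mpr this
  -- closure under addition
  have hadd : ∀ a ∈ W, ∀ b ∈ W, a + b ∈ W := by
    intro a ha b hb
    by_cases hg0 : Int.gcd a b = 0
    · have ha0 : a = 0 := Int.natAbs_eq_zero.mp (Nat.eq_zero_of_gcd_eq_zero_left hg0)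
      have hb0 : b = 0 := Int.natAbs_eq_zero.mp (Nat.eq_zero_of_gcd_eq_zero_right hg0)
      simpa [ha0, hb0] using h0
    · set g : ℤ := (Int.gcd a b : ℤ) with hgdef
      have hgpos : 0 < Int.gcd a b := Nat.pos_of_ne_zero hg0
      have hga : g ∣ a := Int.gcd_dvd_left a b
      have hgb : g ∣ b := Int.gcd_dvd_right a b
      have hcop : Int.gcd (a / g) (b / g) = 1 := Int.gcd_div_gcd_div_gcd hgpos
      have haeq : g * (a / g) = a := Int.mul_ediv_cancel' hga
      have hbeq : g * (b / g) = b := Int.mul_ediv_cancel' hgb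
      have hcab : IsCoprime (a / g) (b / g) := Int.isCoprime_iff_gcd_eq_one.mpr hcop
      -- show g ∈ W
      have key : ∀ u v : ℤ, (u * (2 * a) + v * b = g ∨ u * a + v * (2 * b) = g) → g ∈ W := by
        rintro u v (h | h)
        · have := hop (u * a) (hmul a ha u) (-(v * b)) (hneg _ (hmul b hb v))
          have e : 2 * (u * a) - -(v * b) = g := by rw [← h]; ring
          rwa [e] at this
        · have := hop (v * b) (hmul b hb v) (-(u * a)) (hneg _ (hmul a ha u))
          have e : 2 * (v * b) - -(u * a) = g := by rw [← h]; ring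
          rwa [e] at this
      have hnotboth : ¬ (Even (a / g) ∧ Even (b / g)) := by
        rintro ⟨⟨p, hp⟩, ⟨q, hq⟩⟩
        have : (2 : ℤ) ∣ Int.gcd (a / g) (b / g) := by
          refine Int.dvd_coe_gcd ⟨p, by omega⟩ ⟨q, by omega⟩
        rw [hcop] at this
        omega
      have hgW : g ∈ W := by
        rcases Int.even_or_odd (b / g) with hbe | hbo
        · -- then a/g is odd
          have hao : Odd (a / g) := by
            by_contra hc
            exact hnotboth ⟨Int.not_odd_iff_even.mp hc, hbe⟩
          have hc : IsCoprime (2 * (b / g)) (a / g) := ((hcop2 _ hao).mul_left hcab.symm)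
          obtain ⟨v, u, huv⟩ := hc
          refine key u v (Or.inr ?_)
          have h1 : u * (g * (a / g)) + v * (2 * (g * (b / g)))
              = g * (v * (2 * (b / g)) + u * (a / g)) := by ring
          rw [haeq, hbeq] at h1
          rw [h1, huv, mul_one]
        · have hc : IsCoprime (2 * (a / g)) (b / g) := ((hcop2 _ hbo).mul_left hcab)
          obtain ⟨u, v, huv⟩ := hc
          refine key u v (Or.inl ?_)
          have h1 : u * (2 * (g * (a / g))) + v * (g * (b / g))
              = g * (u * (2 * (a / g)) + v * (b / g)) := by ring
          rw [haeq, hbeq] at h1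
          rw [h1, huv, mul_one]
      obtain ⟨m, hm⟩ : g ∣ a + b := dvd_add hga hgb
      rw [hm, mul_comm]
      exact hmul g hgW m
  -- W is an additive subgroup of ℤ
  let H : AddSubgroup ℤ :=
    { carrier := W
      zero_mem' := h0
      add_mem' := fun hx hy => hadd _ hx _ hy
      neg_mem' := fun hx => hneg _ hx }
  obtain ⟨g, hg⟩ := Int.subgroup_cyclic H
  have hmemW : ∀ x : ℤ, x ∈ W ↔ ∃ n : ℤ, n • g = x := by
    intro x
    constructor
    · intro hx
      have : x ∈ H := hx
      rw [hg] at this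
      exact AddSubgroup.mem_closure_singleton.mp this
    · intro ⟨n, hn⟩
      have : x ∈ AddSubgroup.closure ({g} : Set ℤ) := AddSubgroup.mem_closure_singleton.mpr ⟨n, hn⟩
      rw [← hg] at this
      exact this
  have hVmem : ∀ x : ℤ, x ∈ V ↔ x - v0 ∈ W := by
    intro x
    constructor
    · intro hx
      show v0 + (x - v0) ∈ V
      simpa using hx
    · intro hx
      have : v0 + (x - v0) ∈ V := hx
      simpa using this
  by_cases hgz : g = 0
  · left
    intro x hx y hy
    have hx' := (hmemW _).mp ((hVmem x).mp hx)
    have hy' := (hmemW _).mp ((hVmem y).mp hy)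
    obtain ⟨n, hn⟩ := hx'
    obtain ⟨m, hm⟩ := hy'
    simp [hgz] at hn hm
    omega
  · right
    refine ⟨v0, g.natAbs, by omega, ?_⟩
    ext x
    simp only [Set.mem_setOf_eq]
    rw [hVmem x, hmemW]
    constructor
    · rintro ⟨n, hn⟩
      refine ⟨n * g.sign, ?_⟩
      have e : n * g.sign * (g.natAbs : ℤ) = n * g := by
        rw [mul_assoc, Int.sign_mul_natAbs]
      rw [e]
      simp only [zsmul_eq_mul, Int.cast_id] at hn
      linarith
    · rintro ⟨j, hj⟩
      refine ⟨j * g.sign, ?_⟩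
      simp only [zsmul_eq_mul, Int.cast_id]
      have hs : g.sign * g = (g.natAbs : ℤ) := by
        rcases lt_trichotomy g 0 with h | h | h
        · rw [Int.sign_eq_neg_one_of_neg h]; omega
        · exact absurd h hgz
        · rw [Int.sign_eq_one_of_pos h]; omega
      have e : j * g.sign * g = j * (g.natAbs : ℤ) := by rw [mul_assoc, hs]
      rw [e]
      linarith
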